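/- Let D be a database instance in which all tuples are endogenous, Q a monotone Boolean query with ¬Q(∅), and suppose D ⊨ Q. Then D′ ⊆ D is an S-repair of D w.r.t. κ(Q) if and only if D′ ⊊ D and for every t ∈ D∖D′: t ∈ CS(D, ∅, Q) and D∖(D′ ∪ {t}) ∈ CT(D, D, Q, t). (Proposition 4(b).) -/

import Mathlib

/-- `t` is an actual cause for query `Q` in instance `D` with endogenous part `Dn`. -/
def IsCause {U : Type*} [DecidableEq U] (D Dn : Finset U) (Q : Finset U → Prop) (t : U) : Prop :=
  t ∈ Dn ∧ ∃ Γ ⊆ Dn, t ∉ Γ ∧ Q (D \ Γ) ∧ ¬ Q (D \ insert t Γ)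

/-- `D'` is an S-repair of `D` w.r.t. the denial constraint `κ(Q)`. -/
def IsSRepair {U : Type*} [DecidableEq U] (D : Finset U) (Q : Finset U → Prop)
    (D' : Finset U) : Prop :=
  D' ⊆ D ∧ ¬ Q D' ∧ ∀ D'' ⊆ D, ¬ Q D'' → D' ⊆ D'' → D'' = D'

/-- `CT(D, D, Q, t)`: the subset-minimal contingency sets for `t` w.r.t. `Q`. -/
def CT {U : Type*} [DecidableEq U] (D : Finset U) (Q : Finset U → Prop) (t : U) :
    Set (Finset U) :=
  { s | s ⊆ D ∧ Q (D \ s) ∧ ¬ Q (D \ insert t s) ∧ ∀ s'' ⊂ s, Q (D \ insert t s'') }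

lemma aux1 {U : Type*} [DecidableEq U] {D D' : Finset U} {t : U}
    (htD : t ∈ D) (hsub : D' ⊆ D) : D \ (D \ insert t D') = insert t D' := by
  ext x
  have h1 : x ∈ D' → x ∈ D := @hsub x
  have h2 : x = t → x ∈ D := fun h => h ▸ htD
  simp only [Finset.mem_sdiff, Finset.mem_insert]
  tauto

lemma aux2 {U : Type*} [DecidableEq U] {D D' : Finset U} {t : U}
    (hsub : D' ⊆ D) (htD' : t ∉ D') :
    D \ insert t (D \ insert t D') = D' := by
  ext x
  have h1 : x ∈ D' → x ∈ D := @hsub x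
  have h2 : x = t → x ∉ D' := fun h => h ▸ htD'
  simp only [Finset.mem_sdiff, Finset.mem_insert]
  tauto

/-- Proposition 4(b): with all tuples endogenous and `D ⊨ Q`, `D' ⊆ D` is an S-repair iff
`D' ⊊ D` and every `t ∈ D ∖ D'` is an actual cause for `Q` with
`D ∖ (D' ∪ {t}) ∈ CT(D, D, Q, t)`. -/
theorem SRepair_iff_causes
    {U : Type*} [DecidableEq U] (D : Finset U) (Q : Finset U → Prop)
    (hmono : ∀ S S' : Finset U, S ⊆ S' → Q S → Q S')
    (hempty : ¬ Q ∅) (hQD : Q D)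
    (D' : Finset U) (hsub : D' ⊆ D) :
    IsSRepair D Q D' ↔
      (D' ⊂ D ∧ ∀ t ∈ D \ D', IsCause D D Q t ∧ (D \ insert t D') ∈ CT D Q t) := by
  constructor
  · rintro ⟨-, hnQ, hmax⟩
    have hne : D' ≠ D := fun h => hnQ (h ▸ hQD)
    refine ⟨lt_of_le_of_ne hsub hne, ?_⟩
    intro t ht
    obtain ⟨htD, htD'⟩ := Finset.mem_sdiff.mp ht
    have hins : insert t D' ⊆ D := Finset.insert_subset htD hsub
    have k1 : D \ (D \ insert t D') = insert t D' := aux1 htD hsub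
    have k2 : D \ insert t (D \ insert t D') = D' := aux2 hsub htD'
    have hQins : Q (insert t D') := by
      by_contra h
      have := hmax (insert t D') hins h (Finset.subset_insert t D')
      exact htD' (this ▸ Finset.mem_insert_self t D')
    have htns : t ∉ D \ insert t D' := by simp
    refine ⟨⟨htD, D \ insert t D', Finset.sdiff_subset, htns, ?_, ?_⟩,
      Finset.sdiff_subset, ?_, ?_, ?_⟩
    · rw [k1]; exact hQins
    · rw [k2]; exact hnQ
    · rw [k1]; exact hQins
    · rw [k2]; exact hnQ
    · intro s'' hss
      set D'' := D \ insert t s'' with hD''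
      have hs''sub : s'' ⊆ D \ insert t D' := hss.subset
      have hD'D'' : D' ⊆ D'' := by
        intro x hx
        have hxD : x ∈ D := hsub hx
        simp only [hD'', Finset.mem_sdiff, Finset.mem_insert]
        refine ⟨hxD, ?_⟩
        rintro (rfl | hxs'')
        · exact htD' hx
        · have := hs''sub hxs''
          simp only [Finset.mem_sdiff, Finset.mem_insert] at this
          exact this.2 (Or.inr hx)
      obtain ⟨x, hxs, hxns⟩ := Finset.exists_of_ssubset hss
      have hx' : x ∈ D ∧ x ≠ t ∧ x ∉ D' := by
        simp only [Finset.mem_sdiff, Finset.mem_insert] at hxs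
        exact ⟨hxs.1, fun h => hxs.2 (Or.inl h), fun h => hxs.2 (Or.inr h)⟩
      have hxD'' : x ∈ D'' := by
        simp only [hD'', Finset.mem_sdiff, Finset.mem_insert]
        exact ⟨hx'.1, fun h => h.elim hx'.2.1 hxns⟩
      by_contra hQ
      have := hmax D'' Finset.sdiff_subset hQ hD'D''
      exact hx'.2.2 (this ▸ hxD'')
  · rintro ⟨hlt, hall⟩
    obtain ⟨t0, ht0D, ht0D'⟩ := Finset.exists_of_ssubset hlt
    have ht0 : t0 ∈ D \ D' := Finset.mem_sdiff.mpr ⟨ht0D, ht0D'⟩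
    have k2₀ : D \ insert t0 (D \ insert t0 D') = D' := aux2 hsub ht0D'
    have hnQ : ¬ Q D' := by
      have h := (hall t0 ht0).2.2.2.1
      rwa [k2₀] at h
    refine ⟨hsub, hnQ, ?_⟩
    intro D'' hD''D hnQ'' hD'D''
    by_contra hne
    have hss : D' ⊂ D'' := lt_of_le_of_ne hD'D'' (fun h => hne h.symm)
    obtain ⟨t, htD'', htD'⟩ := Finset.exists_of_ssubset hss
    have htD : t ∈ D := hD''D htD''
    have ht : t ∈ D \ D' := Finset.mem_sdiff.mpr ⟨htD, htD'⟩
    obtain ⟨-, -, hQs, -, hmin⟩ := hall t ht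
    -- s = D \ insert t D'
    have k1 : D \ (D \ insert t D') = insert t D' := aux1 htD hsub
    by_cases hcase : D \ D'' = D \ insert t D'
    · -- then D'' = insert t D'
      have hDD'' : D'' = insert t D' := by
        have := congrArg (fun s => D \ s) hcase
        rw [Finset.sdiff_sdiff_self_left, Finset.inter_eq_right.mpr hD''D, k1] at this
        exact this
      rw [k1] at hQs
      exact hnQ'' (hDD'' ▸ hQs)
    · have hsubset : D \ D'' ⊆ D \ insert t D' := by
        intro x hx
        simp only [Finset.mem_sdiff, Finset.mem_insert] at hx ⊢
        refine ⟨hx.1, ?_⟩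
        rintro (rfl | hxD')
        · exact hx.2 htD''
        · exact hx.2 (hD'D'' hxD')
      have hssub : D \ D'' ⊂ D \ insert t D' := ⟨hsubset, fun h => hcase (le_antisymm hsubset h)⟩
      have hQ' := hmin _ hssub
      have heq : D \ insert t (D \ D'') = D'' \ {t} := by
        ext x
        have h1 : x ∈ D'' → x ∈ D := @hD''D x
        simp only [Finset.mem_sdiff, Finset.mem_insert, Finset.mem_singleton]
        tauto
      rw [heq] at hQ'
      exact hnQ'' (hmono _ _ (Finset.sdiff_subset) hQ')
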